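/- Let G be the weighted multigraph with two vertices joined by three parallel edges of positive lengths ℓ_1, ℓ_2, ℓ_3, polarized by q ≡ 0 (the unique irreducible cubic polarized graph of genus 2). Then φ(G) ≥ (1/27)·(ℓ_1 + ℓ_2 + ℓ_3). -/

import Mathlib

open scoped Classical
open Matrix Filter Topology

/-- A weighted multigraph with vertex type `V` and edge index type `E`:
each edge is assigned an (ordered representative of an unordered) pair of endpoints. -/
structure WMG (V E : Type) where
  ends : E → V × V

namespace WMG

variable {V E : Type} [Fintype V] [DecidableEq V] [Fintype E] [DecidableEq E]

/-- `a` and `b` are joined by some edge belonging to `S`. -/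
def Step (G : WMG V E) (S : Set E) (a b : V) : Prop :=
  ∃ k ∈ S, G.ends k = (a, b) ∨ G.ends k = (b, a)

/-- Any two vertices can be joined by a walk using only edges from `S`. -/
def ConnectedVia (G : WMG V E) (S : Set E) : Prop :=
  ∀ a b : V, Relation.ReflTransGen (G.Step S) a b

/-- `G` is connected. -/
def Connected (G : WMG V E) : Prop := G.ConnectedVia Set.univ

/-- A set `T` of edges is a spanning tree: it has `#V - 1` edges and connects all vertices. -/
def IsSpanningTree (G : WMG V E) (T : Finset E) : Prop :=
  T.card + 1 = Fintype.card V ∧ G.ConnectedVia ↑T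

/-- `η_G(ℓ) = Σ_{T spanning tree} Π_{k ∉ T} ℓ_k`. -/
noncomputable def eta (G : WMG V E) (ℓ : E → ℝ) : ℝ :=
  ∑ T : Finset E, if G.IsSpanningTree T then ∏ k ∈ Tᶜ, ℓ k else 0

/-- The weighted Laplacian matrix of `G`. -/
noncomputable def lap (G : WMG V E) (ℓ : E → ℝ) : Matrix V V ℝ :=
  Matrix.of fun a b =>
    if a = b then
      ∑ k : E, if ((G.ends k).1 = a ∨ (G.ends k).2 = a) ∧ (G.ends k).1 ≠ (G.ends k).2
        then (ℓ k)⁻¹ else 0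
    else
      - ∑ k : E, if G.ends k = (a, b) ∨ G.ends k = (b, a) then (ℓ k)⁻¹ else 0

/-- The standard basis vector (point mass) at a vertex. -/
def delta (a : V) : V → ℝ := fun x => if x = a then 1 else 0

/-- Effective resistance `r(a,b)`: the entry at `a` of the unique solution `h` of
`Q^{(b)} h = u_a` (the Laplacian with row and column `b` deleted).  Equivalently, writing
`h̃` for the extension of `h` by `h̃ b = 0`, it is the entry at `a` of the unique `v` with
`Q v = δ_a - δ_b` and `v b = 0` (the two systems have the same solutions since all row and
column sums of `Q` vanish).  We set `r(a,a) = 0`; this is automatic in the connected case. -/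
noncomputable def res (G : WMG V E) (ℓ : E → ℝ) (a b : V) : ℝ :=
  if h : ∃! v : V → ℝ, G.lap ℓ *ᵥ v = delta a - delta b ∧ v b = 0
  then h.exists.choose a else 0

/-- The valence of a vertex (loop edges counted twice). -/
def valence (G : WMG V E) (a : V) : ℕ :=
  ∑ k : E, ((if (G.ends k).1 = a then 1 else 0) + (if (G.ends k).2 = a then 1 else 0))

/-- The genus of the polarized graph `(G, q)`: `g = #E - #V + 1 + Σ_a q(a)`. -/
def genus (G : WMG V E) (q : V → ℕ) : ℤ :=
  (Fintype.card E : ℤ) - (Fintype.card V : ℤ) + 1 + ∑ a, (q a : ℤ)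

/-- The canonical divisor `K(a) = 2 q(a) + v(a) - 2`, as a real number. -/
noncomputable def Kdiv (G : WMG V E) (q : V → ℕ) (a : V) : ℝ :=
  2 * (q a : ℝ) + (G.valence a : ℝ) - 2

/-- `F(e_k) = 1 - r(e_k)/ℓ_k` where `r(e_k)` is the resistance between the endpoints. -/
noncomputable def Fres (G : WMG V E) (ℓ : E → ℝ) (k : E) : ℝ :=
  1 - G.res ℓ (G.ends k).1 (G.ends k).2 / ℓ k

/-- Zhang's invariant `ε` of the polarized metric graph, via the paper's explicit formula. -/
noncomputable def epsilon (G : WMG V E) (q : V → ℕ) (ℓ : E → ℝ) : ℝ :=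
  (1 / (G.genus q : ℝ)) * ∑ a, ∑ b, (q a : ℝ) * G.Kdiv q b * G.res ℓ a b
  + (((G.genus q : ℝ) - 1) / (3 * (G.genus q : ℝ))) * ∑ k, (G.Fres ℓ k) ^ 2 * ℓ k
  + (1 / (2 * (G.genus q : ℝ))) * ∑ a, G.Kdiv q a *
      ∑ k, G.Fres ℓ k * (G.res ℓ a (G.ends k).1 + G.res ℓ a (G.ends k).2)

/-- `r(K, K) = Σ_{a,b} K(a) K(b) r(a,b)`. -/
noncomputable def rKK (G : WMG V E) (q : V → ℕ) (ℓ : E → ℝ) : ℝ :=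
  ∑ a, ∑ b, G.Kdiv q a * G.Kdiv q b * G.res ℓ a b

/-- Zhang's invariant `φ` of the polarized metric graph, via the paper's explicit formula
`φ = ((5g-2)/(4(g-1))) ε - (3/(8(g-1))) r(K,K) - ℓ(G)/4`. -/
noncomputable def phi (G : WMG V E) (q : V → ℕ) (ℓ : E → ℝ) : ℝ :=
  ((5 * (G.genus q : ℝ) - 2) / (4 * ((G.genus q : ℝ) - 1))) * G.epsilon q ℓ
  - (3 / (8 * ((G.genus q : ℝ) - 1))) * G.rKK q ℓ
  - (∑ k, ℓ k) / 4

/-- The map on vertices identifying `b` with `a` (realized on the subtype omitting `b`). -/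
def fuseV (a b : V) (hab : a ≠ b) (x : V) : {y : V // y ≠ b} :=
  if h : x = b then ⟨a, hab⟩ else ⟨x, h⟩

/-- The fusion `G'` of two distinct vertices `a, b` of `G`: identify `a` and `b`,
keeping all edges and lengths. -/
def fuse (G : WMG V E) (a b : V) (hab : a ≠ b) : WMG {y : V // y ≠ b} E :=
  ⟨fun k => (fuseV a b hab (G.ends k).1, fuseV a b hab (G.ends k).2)⟩

/-- The contraction `G/e` of a non-loop edge: identify the two endpoints of `e`,
delete `e`, and keep all other edges. -/
def contract (G : WMG V E) (k0 : E) (hk : (G.ends k0).1 ≠ (G.ends k0).2) :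
    WMG {y : V // y ≠ (G.ends k0).2} {k : E // k ≠ k0} :=
  ⟨fun k => (fuseV (G.ends k0).1 (G.ends k0).2 hk (G.ends k.1).1,
             fuseV (G.ends k0).1 (G.ends k0).2 hk (G.ends k.1).2)⟩

end WMG

/-- The `i`-th elementary symmetric polynomial of the family `ℓ`. -/
noncomputable def esymE {E : Type} [Fintype E] [DecidableEq E] (i : ℕ) (ℓ : E → ℝ) : ℝ :=
  ∑ s ∈ Finset.powersetCard i (Finset.univ : Finset E), ∏ k ∈ s, ℓ k

/-- The theta graph: two vertices joined by three parallel edges. -/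
def thetaGraph : WMG (Fin 2) (Fin 3) := ⟨fun _ => ((0 : Fin 2), (1 : Fin 2))⟩


section Aux
open WMG

lemma res_eq_of {V E : Type} [Fintype V] [DecidableEq V] [Fintype E] [DecidableEq E]
    (G : WMG V E) (ℓ : E → ℝ) (a b : V) (v : V → ℝ)
    (hv : G.lap ℓ *ᵥ v = delta a - delta b ∧ v b = 0)
    (huniq : ∀ w, (G.lap ℓ *ᵥ w = delta a - delta b ∧ w b = 0) → w = v) :
    G.res ℓ a b = v a := by
  have h : ∃! v : V → ℝ, G.lap ℓ *ᵥ v = delta a - delta b ∧ v b = 0 := ⟨v, hv, huniq⟩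
  rw [WMG.res, dif_pos h]
  rw [huniq _ h.exists.choose_spec]

variable (ℓ : Fin 3 → ℝ)

lemma s_ne (hℓ : ∀ k, 0 < ℓ k) : ((ℓ 0)⁻¹ + (ℓ 1)⁻¹ + (ℓ 2)⁻¹) ≠ 0 := by
  have h0 := hℓ 0; have h1 := hℓ 1; have h2 := hℓ 2; positivity

lemma theta_lap : thetaGraph.lap ℓ =
    Matrix.of fun a b => if a = b then ((ℓ 0)⁻¹ + (ℓ 1)⁻¹ + (ℓ 2)⁻¹)
      else -((ℓ 0)⁻¹ + (ℓ 1)⁻¹ + (ℓ 2)⁻¹) := by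
  ext a b
  fin_cases a <;> fin_cases b <;>
    simp [WMG.lap, thetaGraph, Fin.sum_univ_three, Prod.ext_iff]

lemma theta_mulVec (v : Fin 2 → ℝ) (i : Fin 2) :
    (thetaGraph.lap ℓ *ᵥ v) i =
      ((ℓ 0)⁻¹ + (ℓ 1)⁻¹ + (ℓ 2)⁻¹) * (if i = 0 then v 0 - v 1 else v 1 - v 0) := by
  rw [theta_lap]
  fin_cases i <;> simp [Matrix.mulVec, dotProduct, Fin.sum_univ_two] <;> ring

lemma theta_res_01 (hℓ : ∀ k, 0 < ℓ k) : thetaGraph.res ℓ 0 1 = ((ℓ 0)⁻¹ + (ℓ 1)⁻¹ + (ℓ 2)⁻¹)⁻¹ := by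
  have hs := s_ne ℓ hℓ
  set s := (ℓ 0)⁻¹ + (ℓ 1)⁻¹ + (ℓ 2)⁻¹ with hsdef
  have := res_eq_of thetaGraph ℓ 0 1 (fun x => if x = 0 then s⁻¹ else 0) ?_ ?_
  · simpa using this
  · constructor
    · funext i
      rw [theta_mulVec]
      fin_cases i <;> simp [WMG.delta, hs, ← hsdef]
    · simp
  · intro w hw
    have h0 := congrFun hw.1 0
    rw [theta_mulVec] at h0
    simp [WMG.delta, hw.2, ← hsdef] at h0
    funext i
    fin_cases i
    · simpa using eq_inv_of_mul_eq_one_left (mul_comm (w 0) s ▸ h0)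
    · simpa using hw.2

lemma theta_res_10 (hℓ : ∀ k, 0 < ℓ k) : thetaGraph.res ℓ 1 0 = ((ℓ 0)⁻¹ + (ℓ 1)⁻¹ + (ℓ 2)⁻¹)⁻¹ := by
  have hs := s_ne ℓ hℓ
  set s := (ℓ 0)⁻¹ + (ℓ 1)⁻¹ + (ℓ 2)⁻¹ with hsdef
  have := res_eq_of thetaGraph ℓ 1 0 (fun x => if x = 1 then s⁻¹ else 0) ?_ ?_
  · simpa using this
  · constructor
    · funext i
      rw [theta_mulVec]
      fin_cases i <;> simp [WMG.delta, hs, ← hsdef]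
    · simp
  · intro w hw
    have h0 := congrFun hw.1 1
    rw [theta_mulVec] at h0
    simp [WMG.delta, hw.2, ← hsdef] at h0
    funext i
    fin_cases i
    · simpa using hw.2
    · simpa using eq_inv_of_mul_eq_one_left (mul_comm (w 1) s ▸ h0)

lemma theta_res_diag (hℓ : ∀ k, 0 < ℓ k) (a : Fin 2) : thetaGraph.res ℓ a a = 0 := by
  have hs := s_ne ℓ hℓ
  have := res_eq_of thetaGraph ℓ a a (fun _ => 0) ?_ ?_
  · simpa using this
  · constructor
    · funext i
      rw [theta_mulVec]
      simp [WMG.delta]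
    · rfl
  · intro w hw
    have h0 := congrFun hw.1 0
    have h1 := congrFun hw.1 1
    rw [theta_mulVec] at h0 h1
    simp [WMG.delta, sub_eq_zero] at h0 h1
    have hd : w 0 = w 1 := by
      rcases h0 with h | h
      · exact absurd h hs
      · exact h
    funext i
    fin_cases i <;> fin_cases a <;> simp_all [hw.2]

set_option maxHeartbeats 2000000 in
lemma theta_phi (hℓ : ∀ k, 0 < ℓ k) :
    thetaGraph.phi (fun _ => 0) ℓ =
      (ℓ 0 + ℓ 1 + ℓ 2) / 12 - 5 * ((ℓ 0)⁻¹ + (ℓ 1)⁻¹ + (ℓ 2)⁻¹)⁻¹ / 12 := by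
  have hs := s_ne ℓ hℓ
  have h0 := (hℓ 0).ne'
  have h1 := (hℓ 1).ne'
  have h2 := (hℓ 2).ne'
  have hends : ∀ k : Fin 3, thetaGraph.ends k = (0, 1) := fun _ => rfl
  rw [WMG.phi, WMG.epsilon, WMG.rKK]
  simp only [WMG.genus, WMG.Kdiv, WMG.valence, WMG.Fres, hends,
    Fin.sum_univ_two, Fin.sum_univ_three, theta_res_01 ℓ hℓ, theta_res_10 ℓ hℓ,
    theta_res_diag ℓ hℓ]
  norm_num [thetaGraph]
  have hd : ℓ 0 * ℓ 1 + ℓ 0 * ℓ 2 + ℓ 1 * ℓ 2 ≠ 0 := by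
    have := hℓ 0; have := hℓ 1; have := hℓ 2; positivity
  have hr : ((ℓ 0)⁻¹ + (ℓ 1)⁻¹ + (ℓ 2)⁻¹)⁻¹ = ℓ 0 * ℓ 1 * ℓ 2 / (ℓ 0 * ℓ 1 + ℓ 0 * ℓ 2 + ℓ 1 * ℓ 2) := by
    rw [inv_eq_iff_eq_inv, eq_comm, inv_div]
    field_simp
    ring
  rw [hr]
  have hd' : ℓ 0 * (ℓ 1 + ℓ 2) + ℓ 1 * ℓ 2 ≠ 0 := by convert hd using 1; ring
  field_simp
  ring

end Aux

/-- Let `G` be the graph with two vertices joined by three parallel edges of positive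
lengths `ℓ_1, ℓ_2, ℓ_3`, polarized by `q ≡ 0` (the unique irreducible cubic polarized
graph of genus 2).  Then `φ(G) ≥ (1/27)(ℓ_1 + ℓ_2 + ℓ_3)`. -/
theorem stmt_15 (ℓ : Fin 3 → ℝ) (hℓ : ∀ k, 0 < ℓ k) :
    thetaGraph.phi (fun _ => 0) ℓ ≥ (1 / 27 : ℝ) * (ℓ 0 + ℓ 1 + ℓ 2) := by
  rw [theta_phi ℓ hℓ]
  have ha := hℓ 0
  have hb := hℓ 1
  have hc := hℓ 2
  set a := ℓ 0
  set b := ℓ 1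
  set c := ℓ 2
  have hs : (0:ℝ) < a⁻¹ + b⁻¹ + c⁻¹ := by positivity
  have h9 : 9 ≤ (a + b + c) * (a⁻¹ + b⁻¹ + c⁻¹) := by
    have hrw : a⁻¹ + b⁻¹ + c⁻¹ = (b * c + a * c + a * b) / (a * b * c) := by
      field_simp
    rw [hrw, mul_div_assoc', le_div_iff₀ (by positivity : (0:ℝ) < a * b * c)]
    nlinarith [sq_nonneg (a - b), sq_nonneg (a - c), sq_nonneg (b - c),
      mul_pos ha hb, mul_pos ha hc, mul_pos hb hc, ha.le, hb.le, hc.le,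
      mul_nonneg (mul_nonneg ha.le hb.le) hc.le,
      mul_nonneg (sq_nonneg (a - b)) hc.le, mul_nonneg (sq_nonneg (a - c)) hb.le,
      mul_nonneg (sq_nonneg (b - c)) ha.le]
  have h' : 9 * (a⁻¹ + b⁻¹ + c⁻¹)⁻¹ ≤ a + b + c := by
    have := mul_le_mul_of_nonneg_right h9 (inv_nonneg.mpr hs.le)
    rwa [mul_assoc, mul_inv_cancel₀ hs.ne', mul_one] at this
  linarith
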